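/- Let H = Q(2, β) be the symplectic fermion quasi-Hopf algebra with N = 2, and let A ⊂ H be the quasi-Hopf subalgebra generated by K, f_1^+, f_1^-. Let P_0(A) be the 4-dimensional projective cover of the trivial A-module, with basis v_0, v_1^- = f_1^-.v_0, v_1^+ = f_1^+.v_0, v_2 = f_1^+ f_1^-.v_0. For every 2×2 complex matrix μ = (a^-, a^+; b^-, b^+), defining the action of f_2^ε on P_0(A) by f_2^ε = a^ε f_1^- + b^ε f_1^+ (ε = ±) yields an H-module P_μ lifting P_0(A); every lift of P_0(A) to an H-module arises this way; and P_μ ≅ P_{μ'} as H-modules if and only if μ = μ'. -/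

import Mathlib

noncomputable section

/-- The data of a module over the quasi-Hopf subalgebra `A ⊂ H = Q(2,β)`
generated by `K, f₁⁺, f₁⁻`: a complex vector space `V` together with operators
`Kop, fp, fm` (the actions of `K, f₁⁺, f₁⁻`) satisfying the defining relations
`K⁴ = 1`, `{f₁^±, K} = 0`, `{f₁^±, f₁^±} = 0`, `{f₁⁺, f₁⁻} = e₁ = (1−K²)/2`. -/
structure SFOps (V : Type) [AddCommGroup V] [Module ℂ V] where
  Kop : Module.End ℂ V
  fp : Module.End ℂ V
  fm : Module.End ℂ V
  K_four : Kop ^ 4 = 1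
  anticomm_Kfp : fp * Kop + Kop * fp = 0
  anticomm_Kfm : fm * Kop + Kop * fm = 0
  anticomm_fpfp : fp * fp + fp * fp = 0
  anticomm_fmfm : fm * fm + fm * fm = 0
  anticomm_fpfm : fp * fm + fm * fp = (2 : ℂ)⁻¹ • (1 - Kop ^ 2)

namespace SFOps

variable {V : Type} [AddCommGroup V] [Module ℂ V]

/-- The operator `f₁^δ` (`δ : Bool`, `true = +`). -/
def f1 (O : SFOps V) (δ : Bool) : Module.End ℂ V := if δ then O.fp else O.fm

/-- A lift of the `A`-module `V` to a module over `H = Q(2,β)`: a pair of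
additional operators `g ε` (the actions of `f₂^ε`) satisfying the remaining
defining relations of `H`:
`{f₂^ε, K} = 0`, `{f₂^ε, f₁^δ} = 0`, `{f₂^ε, f₂^δ} = δ_{ε≠δ} e₁`. -/
structure IsLift (O : SFOps V) (g : Bool → Module.End ℂ V) : Prop where
  anticomm_K : ∀ ε, g ε * O.Kop + O.Kop * g ε = 0
  anticomm_f1 : ∀ ε δ, g ε * O.f1 δ + O.f1 δ * g ε = 0
  anticomm_g : ∀ ε δ, g ε * g δ + g δ * g ε =
    if ε ≠ δ then (2 : ℂ)⁻¹ • (1 - O.Kop ^ 2) else 0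

/-- The lifted action of `f₂^ε` determined by a 2×2 complex matrix
`μ = (a⁻ a⁺; b⁻ b⁺)`, namely `f₂^ε = a^ε f₁⁻ + b^ε f₁⁺`.
The resulting `H`-module is `P_μ`. -/
def liftOps (O : SFOps V) (a b : Bool → ℂ) : Bool → Module.End ℂ V :=
  fun ε => a ε • O.fm + b ε • O.fp

end SFOps

open SFOps

theorem lifts_of_projective_cover_classified
    (β : ℂ) (hβ : β ^ 4 = (-1 : ℂ) ^ 2)
    (V : Type) [AddCommGroup V] [Module ℂ V] (O : SFOps V)
    (v0 : V) (hKv0 : O.Kop v0 = v0)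
    (hLI : LinearIndependent ℂ ![v0, O.fm v0, O.fp v0, (O.fp * O.fm) v0])
    (hspan : Submodule.span ℂ (Set.range ![v0, O.fm v0, O.fp v0, (O.fp * O.fm) v0]) = ⊤) :
    (∀ a b : Bool → ℂ, IsLift O (liftOps O a b))
    ∧ (∀ g : Bool → Module.End ℂ V, IsLift O g → ∃ a b : Bool → ℂ, g = liftOps O a b)
    ∧ (∀ a b a' b' : Bool → ℂ,
        (∃ φ : V ≃ₗ[ℂ] V,
          (∀ x : V, φ (O.Kop x) = O.Kop (φ x)) ∧
          (∀ x : V, φ (O.fp x) = O.fp (φ x)) ∧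
          (∀ x : V, φ (O.fm x) = O.fm (φ x)) ∧
          (∀ (ε : Bool) (x : V), φ (liftOps O a b ε x) = liftOps O a' b' ε (φ x)))
        ↔ (a = a' ∧ b = b')) := by
  classical
  -- pointwise action of K on the basis vectors
  have hKvm : O.Kop (O.fm v0) = -(O.fm v0) := by
    have h := LinearMap.congr_fun O.anticomm_Kfm v0
    simp only [LinearMap.add_apply, Module.End.mul_apply, LinearMap.zero_apply, hKv0] at h
    exact eq_neg_of_add_eq_zero_right h
  have hKvp : O.Kop (O.fp v0) = -(O.fp v0) := by
    have h := LinearMap.congr_fun O.anticomm_Kfp v0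
    simp only [LinearMap.add_apply, Module.End.mul_apply, LinearMap.zero_apply, hKv0] at h
    exact eq_neg_of_add_eq_zero_right h
  have hKv2 : O.Kop (O.fp (O.fm v0)) = O.fp (O.fm v0) := by
    have h := LinearMap.congr_fun O.anticomm_Kfp (O.fm v0)
    simp only [LinearMap.add_apply, Module.End.mul_apply, LinearMap.zero_apply, hKvm,
      map_neg] at h
    exact (neg_add_eq_zero.mp h).symm
  -- K² = 1, hence e₁ = 0
  have hK2 : O.Kop ^ 2 = 1 := by
    apply LinearMap.ext_on hspan
    rintro x ⟨i, rfl⟩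
    fin_cases i <;>
      simp [pow_two, Module.End.mul_apply, hKv0, hKvm, hKvp, hKv2]
  have hfm2 : O.fm * O.fm = 0 := by
    have h2 : (2 : ℂ) • (O.fm * O.fm) = 0 := by rw [two_smul]; exact O.anticomm_fmfm
    rcases smul_eq_zero.mp h2 with h | h
    · norm_num at h
    · exact h
  have hfp2 : O.fp * O.fp = 0 := by
    have h2 : (2 : ℂ) • (O.fp * O.fp) = 0 := by rw [two_smul]; exact O.anticomm_fpfp
    rcases smul_eq_zero.mp h2 with h | h
    · norm_num at h
    · exact h
  have hpm : O.fp * O.fm + O.fm * O.fp = 0 := by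
    rw [O.anticomm_fpfm, hK2]; simp
  have hmp : O.fm * O.fp = -(O.fp * O.fm) := eq_neg_of_add_eq_zero_right hpm
  -- pointwise consequences
  have hfm2' : O.fm (O.fm v0) = 0 := by
    have := LinearMap.congr_fun hfm2 v0
    simpa [Module.End.mul_apply] using this
  have hfp2' : O.fp (O.fp (O.fm v0)) = 0 := by
    have := LinearMap.congr_fun hfp2 (O.fm v0)
    simpa [Module.End.mul_apply] using this
  have hfmv2 : O.fm (O.fp (O.fm v0)) = 0 := by
    have := LinearMap.congr_fun hmp (O.fm v0)
    simpa [Module.End.mul_apply, LinearMap.neg_apply, hfm2'] using this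
  -- Part 1
  have part1 : ∀ a b : Bool → ℂ, IsLift O (liftOps O a b) := by
    intro a b
    have h1 : O.fm * O.Kop = -(O.Kop * O.fm) := eq_neg_of_add_eq_zero_left O.anticomm_Kfm
    have h2 : O.fp * O.Kop = -(O.Kop * O.fp) := eq_neg_of_add_eq_zero_left O.anticomm_Kfp
    refine ⟨fun ε => ?_, fun ε δ => ?_, fun ε δ => ?_⟩
    · simp only [liftOps, add_mul, mul_add, smul_mul_assoc, mul_smul_comm, h1, h2]
      module
    · cases δ <;>
        simp only [liftOps, f1, if_true, if_false, Bool.false_eq_true, ite_false, ite_true,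
          add_mul, mul_add, smul_mul_assoc, mul_smul_comm, hfm2, hfp2, hmp] <;>
        module
    · split_ifs with h
      · rw [hK2]
        simp only [sub_self, smul_zero]
        simp only [liftOps, add_mul, mul_add, smul_mul_assoc, mul_smul_comm, hfm2, hfp2, hmp]
        module
      · simp only [liftOps, add_mul, mul_add, smul_mul_assoc, mul_smul_comm, hfm2, hfp2, hmp]
        module
  -- the basis
  let B : Module.Basis (Fin 4) ℂ V := Module.Basis.mk hLI hspan.ge
  have w0 : B 0 = v0 := Module.Basis.mk_apply hLI hspan.ge 0
  have w1 : B 1 = O.fm v0 := Module.Basis.mk_apply hLI hspan.ge 1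
  have w2 : B 2 = O.fp v0 := Module.Basis.mk_apply hLI hspan.ge 2
  have w3 : B 3 = O.fp (O.fm v0) := Module.Basis.mk_apply hLI hspan.ge 3
  have coeffs : ∀ u : V,
      u = (B.repr u 0) • v0 + (B.repr u 1) • O.fm v0 + (B.repr u 2) • O.fp v0
        + (B.repr u 3) • O.fp (O.fm v0) := by
    intro u
    have h := B.sum_repr u
    rw [Fin.sum_univ_four, w0, w1, w2, w3] at h
    exact h.symm
  have licoeff : ∀ d0 d1 d2 d3 : ℂ,
      d0 • v0 + d1 • O.fm v0 + d2 • O.fp v0 + d3 • O.fp (O.fm v0) = 0 →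
      d0 = 0 ∧ d1 = 0 ∧ d2 = 0 ∧ d3 = 0 := by
    intro d0 d1 d2 d3 hd
    have h := Fintype.linearIndependent_iff.mp hLI ![d0, d1, d2, d3] ?_
    · exact ⟨h 0, h 1, h 2, h 3⟩
    · rw [Fin.sum_univ_four]
      exact hd
  -- eigenvector decompositions
  have eigenM : ∀ u : V, O.Kop u = -u →
      u = (B.repr u 1) • O.fm v0 + (B.repr u 2) • O.fp v0 := by
    intro u hu
    have h := coeffs u
    have h2 := congrArg O.Kop h
    rw [hu, map_add, map_add, map_add, map_smul, map_smul, map_smul, map_smul, hKv0, hKvm,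
      hKvp, hKv2] at h2
    have h3 : (2 * (B.repr u 0)) • v0 + (0 : ℂ) • O.fm v0 + (0 : ℂ) • O.fp v0
        + (2 * (B.repr u 3)) • O.fp (O.fm v0) = 0 := by
      linear_combination (norm := module) -h - h2
    obtain ⟨e0, -, -, e3⟩ := licoeff _ _ _ _ h3
    have e0' : B.repr u 0 = 0 := by
      rcases mul_eq_zero.mp e0 with h' | h'
      · norm_num at h'
      · exact h'
    have e3' : B.repr u 3 = 0 := by
      rcases mul_eq_zero.mp e3 with h' | h'
      · norm_num at h'
      · exact h' 
    rw [e0', e3', zero_smul, zero_smul, zero_add, add_zero] at h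
    exact h
  have eigenP : ∀ u : V, O.Kop u = u →
      u = (B.repr u 0) • v0 + (B.repr u 3) • O.fp (O.fm v0) := by
    intro u hu
    have h := coeffs u
    have h2 := congrArg O.Kop h
    rw [hu, map_add, map_add, map_add, map_smul, map_smul, map_smul, map_smul, hKv0, hKvm,
      hKvp, hKv2] at h2
    have h3 : (0 : ℂ) • v0 + (2 * (B.repr u 1)) • O.fm v0 + (2 * (B.repr u 2)) • O.fp v0
        + (0 : ℂ) • O.fp (O.fm v0) = 0 := by
      linear_combination (norm := module) h2 - h
    obtain ⟨-, e1, e2, -⟩ := licoeff _ _ _ _ h3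
    have e1' : B.repr u 1 = 0 := by
      rcases mul_eq_zero.mp e1 with h' | h'
      · norm_num at h'
      · exact h'
    have e2' : B.repr u 2 = 0 := by
      rcases mul_eq_zero.mp e2 with h' | h'
      · norm_num at h'
      · exact h' 
    rw [e1', e2', zero_smul, zero_smul, add_zero, add_zero] at h
    exact h
  refine ⟨part1, ?_, ?_⟩
  -- Part 2
  · intro g hg
    refine ⟨fun ε => B.repr (g ε v0) 1, fun ε => B.repr (g ε v0) 2, ?_⟩
    funext ε
    have hKg : O.Kop (g ε v0) = -(g ε v0) := by
      have h := LinearMap.congr_fun (hg.anticomm_K ε) v0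
      simp only [LinearMap.add_apply, Module.End.mul_apply, LinearMap.zero_apply, hKv0] at h
      exact eq_neg_of_add_eq_zero_right h
    have hgv0 := eigenM _ hKg
    set l := liftOps O (fun ε => B.repr (g ε v0) 1) (fun ε => B.repr (g ε v0) 2) ε with hl
    have hlift := part1 (fun ε => B.repr (g ε v0) 1) (fun ε => B.repr (g ε v0) 2)
    have hd0 : (g ε - l) v0 = 0 := by
      rw [LinearMap.sub_apply, sub_eq_zero, hl]
      simp only [liftOps, LinearMap.add_apply, LinearMap.smul_apply]
      exact hgv0
    have hdm : (g ε - l) * O.fm + O.fm * (g ε - l) = 0 := by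
      have e1 : g ε * O.fm = -(O.fm * g ε) := by
        have h1 := hg.anticomm_f1 ε false
        simp only [f1, Bool.false_eq_true, ite_false] at h1
        exact eq_neg_of_add_eq_zero_left h1
      have e2 : l * O.fm = -(O.fm * l) := by
        have h2 := hlift.anticomm_f1 ε false
        simp only [f1, Bool.false_eq_true, ite_false] at h2
        exact eq_neg_of_add_eq_zero_left h2
      rw [sub_mul, mul_sub, e1, e2]; abel
    have hdp : (g ε - l) * O.fp + O.fp * (g ε - l) = 0 := by
      have e1 : g ε * O.fp = -(O.fp * g ε) := by
        have h1 := hg.anticomm_f1 ε true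
        simp only [f1, ite_true] at h1
        exact eq_neg_of_add_eq_zero_left h1
      have e2 : l * O.fp = -(O.fp * l) := by
        have h2 := hlift.anticomm_f1 ε true
        simp only [f1, ite_true] at h2
        exact eq_neg_of_add_eq_zero_left h2
      rw [sub_mul, mul_sub, e1, e2]; abel
    have hm0 : (g ε - l) (O.fm v0) = 0 := by
      have h := LinearMap.congr_fun hdm v0
      simpa only [LinearMap.add_apply, Module.End.mul_apply, LinearMap.zero_apply, hd0,
        map_zero, add_zero] using h
    have hp0 : (g ε - l) (O.fp v0) = 0 := by
      have h := LinearMap.congr_fun hdp v0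
      simpa only [LinearMap.add_apply, Module.End.mul_apply, LinearMap.zero_apply, hd0,
        map_zero, add_zero] using h
    have h20 : (g ε - l) (O.fp (O.fm v0)) = 0 := by
      have h := LinearMap.congr_fun hdp (O.fm v0)
      simpa only [LinearMap.add_apply, Module.End.mul_apply, LinearMap.zero_apply, hm0,
        map_zero, add_zero] using h
    apply B.ext
    intro i
    rw [← sub_eq_zero, ← LinearMap.sub_apply]
    fin_cases i
    · show (g ε - l) (B 0) = 0
      rw [w0]; exact hd0
    · show (g ε - l) (B 1) = 0
      rw [w1]; exact hm0
    · show (g ε - l) (B 2) = 0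
      rw [w2]; exact hp0
    · show (g ε - l) (B 3) = 0
      rw [w3]; exact h20
  -- Part 3
  · intro a b a' b'
    constructor
    · rintro ⟨φ, hφK, hφp, hφm, hφl⟩
      have hKφ : O.Kop (φ v0) = φ v0 := by rw [← hφK, hKv0]
      have hrep := eigenP _ hKφ
      set x := B.repr (φ v0) 0 with hxdef
      set t := B.repr (φ v0) 3 with htdef
      have hφvm : φ (O.fm v0) = x • O.fm v0 := by
        rw [hφm v0, hrep, map_add, map_smul, map_smul, hfmv2, smul_zero, add_zero]
      have hφvp : φ (O.fp v0) = x • O.fp v0 := by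
        rw [hφp v0, hrep, map_add, map_smul, map_smul, hfp2', smul_zero, add_zero]
      have hfmφ : O.fm (φ v0) = x • O.fm v0 := by rw [← hφm v0]; exact hφvm
      have hfpφ : O.fp (φ v0) = x • O.fp v0 := by rw [← hφp v0]; exact hφvp
      have hvmne : O.fm v0 ≠ 0 := by
        have := hLI.ne_zero 1; simpa using this
      have hx : x ≠ 0 := by
        intro h0
        apply hvmne
        apply φ.injective
        rw [hφvm, h0, zero_smul, map_zero]
      have key : ∀ ε : Bool, a ε = a' ε ∧ b ε = b' ε := by
        intro ε
        have k := hφl ε v0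
        simp only [liftOps, LinearMap.add_apply, LinearMap.smul_apply, map_add, map_smul,
          hφvm, hφvp, hfmφ, hfpφ] at k
        have h3 : (0 : ℂ) • v0 + (x * (a ε - a' ε)) • O.fm v0 + (x * (b ε - b' ε)) • O.fp v0
            + (0 : ℂ) • O.fp (O.fm v0) = 0 := by
          linear_combination (norm := module) k
        obtain ⟨-, e1, e2, -⟩ := licoeff _ _ _ _ h3
        constructor
        · have := mul_eq_zero.mp e1
          rcases this with h | h
          · exact absurd h hx
          · exact sub_eq_zero.mp h
        · have := mul_eq_zero.mp e2
          rcases this with h | h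
          · exact absurd h hx
          · exact sub_eq_zero.mp h
      exact ⟨funext fun ε => (key ε).1, funext fun ε => (key ε).2⟩
    · rintro ⟨rfl, rfl⟩
      exact ⟨LinearEquiv.refl ℂ V, fun x => rfl, fun x => rfl, fun x => rfl, fun ε x => rfl⟩
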